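/- arXiv:1712.07724 — 7 statements merged into one kernel-verified Lean document; each statement's English description precedes it below -/
import Mathlib

section
/- There is no club C ⊆ ω₁ measuring the sequence (S ∩ δ : δ a limit ordinal < ω₁) when S is a stationary and co-stationary subset of ω₁. That is, if S ⊆ ω₁ is stationary and ω₁ \ S is stationary, then for every club C ⊆ ω₁ there exists δ ∈ C such that for all α < δ, neither (C ∩ δ) \ α ⊆ S nor ((C ∩ δ) \ α) ∩ S = ∅. -/
noncomputable def omega1 : Ordinal.{0} := (Cardinal.aleph 1).ord

def IsClubOmega1 (C : Set Ordinal) : Prop :=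
  C ⊆ Set.Iio omega1 ∧
    (∀ δ, δ < omega1 → δ ≠ 0 → sSup (C ∩ Set.Iio δ) = δ → δ ∈ C) ∧
    ∀ α, α < omega1 → ∃ β ∈ C, α < β

def IsStationaryOmega1 (S : Set Ordinal) : Prop :=
  S ⊆ Set.Iio omega1 ∧ ∀ C, IsClubOmega1 C → (S ∩ C).Nonempty

lemma isClub_inter_Ioi (C : Set Ordinal) (hC : IsClubOmega1 C) (α : Ordinal) (hα : α < omega1) :
    IsClubOmega1 (C ∩ Set.Ioi α) := by
  obtain ⟨hsub, hcl, hub⟩ := hC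
  refine ⟨fun x hx => hsub hx.1, ?_, ?_⟩
  · intro δ hδ hδ0 hsup
    have hne : (C ∩ Set.Ioi α ∩ Set.Iio δ).Nonempty := by
      by_contra h
      rw [Set.not_nonempty_iff_eq_empty] at h
      rw [h] at hsup
      simp at hsup
      exact hδ0 hsup.symm
    obtain ⟨β, ⟨hβC, hβα⟩, hβδ⟩ := hne
    have hαδ : α < δ := lt_trans hβα hβδ
    have hδC : δ ∈ C := by
      apply hcl δ hδ hδ0
      apply le_antisymm
      · exact csSup_le ⟨β, hβC, hβδ⟩ fun x hx => le_of_lt hx.2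
      · calc δ = sSup (C ∩ Set.Ioi α ∩ Set.Iio δ) := hsup.symm
          _ ≤ sSup (C ∩ Set.Iio δ) :=
            csSup_le_csSup ⟨δ, fun x hx => le_of_lt hx.2⟩ ⟨β, ⟨hβC, hβα⟩, hβδ⟩
              fun x hx => ⟨hx.1.1, hx.2⟩
    exact ⟨hδC, hαδ⟩
  · intro γ hγ
    obtain ⟨β, hβC, hβ⟩ := hub (max α γ) (max_lt hα hγ)
    exact ⟨β, ⟨hβC, lt_of_le_of_lt (le_max_left _ _) hβ⟩, lt_of_le_of_lt (le_max_right _ _) hβ⟩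

theorem stmt0 (S : Set Ordinal) (h1 : IsStationaryOmega1 S)
    (h2 : IsStationaryOmega1 (Set.Iio omega1 \ S)) (C : Set Ordinal) (hC : IsClubOmega1 C) :
    ∃ δ ∈ C, ∀ α < δ,
      ¬ ((C ∩ Set.Iio δ) \ Set.Iio α ⊆ S) ∧ (((C ∩ Set.Iio δ) \ Set.Iio α) ∩ S).Nonempty := by
  -- unbounded picks in C ∩ S and C \ S
  have ex : ∀ (b : Bool) (α : Ordinal),
      ∃ β, β ∈ C ∧ (if b then β ∈ S else β ∉ S) ∧ (α < omega1 → α < β) := by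
    intro b α
    by_cases hα : α < omega1
    · have hclub := isClub_inter_Ioi C hC α hα
      cases b with
      | true =>
        obtain ⟨β, hβS, hβC, hβα⟩ := h1.2 _ hclub
        exact ⟨β, hβC, by simpa using hβS, fun _ => hβα⟩
      | false =>
        obtain ⟨β, hβS, hβC, hβα⟩ := h2.2 _ hclub
        exact ⟨β, hβC, by simpa using hβS.2, fun _ => hβα⟩
    · cases b with
      | true =>
        obtain ⟨β, hβS, hβC⟩ := h1.2 _ hC
        exact ⟨β, hβC, by simpa using hβS, fun h => absurd h hα⟩
      | false =>
        obtain ⟨β, hβS, hβC⟩ := h2.2 _ hC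
        exact ⟨β, hβC, by simpa using hβS.2, fun h => absurd h hα⟩
  classical
  let g : ℕ → Ordinal := fun n =>
    Nat.rec (Classical.choose (ex true 0))
      (fun n ih => Classical.choose (ex (decide (Even (n + 1))) ih)) n
  have hgC : ∀ n, g n ∈ C := by
    intro n
    cases n with
    | zero => exact (Classical.choose_spec (ex true 0)).1
    | succ n => exact (Classical.choose_spec (ex (decide (Even (n + 1))) (g n))).1
  have hgω : ∀ n, g n < omega1 := fun n => hC.1 (hgC n)
  have hglt : ∀ n, g n < g (n + 1) := by
    intro n
    exact (Classical.choose_spec (ex (decide (Even (n + 1))) (g n))).2.2 (hgω n)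
  have hgS : ∀ n, Even n → g n ∈ S := by
    intro n hn
    cases n with
    | zero => exact (by simpa using (Classical.choose_spec (ex true 0)).2.1 : Classical.choose (ex true 0) ∈ S)
    | succ n =>
      have this := (Classical.choose_spec (ex (decide (Even (n + 1))) (g n))).2.1
      change (if decide (Even (n + 1)) = true then g (n + 1) ∈ S else g (n + 1) ∉ S) at this
      rw [decide_eq_true hn, if_pos rfl] at this
      exact this
  have hgT : ∀ n, ¬ Even n → g n ∉ S := by
    intro n hn
    cases n with
    | zero => exact absurd (Even.zero) hn
    | succ n =>
      have this := (Classical.choose_spec (ex (decide (Even (n + 1))) (g n))).2.1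
      change (if decide (Even (n + 1)) = true then g (n + 1) ∈ S else g (n + 1) ∉ S) at this
      rw [decide_eq_false hn, if_neg Bool.false_ne_true] at this
      exact this
  have hgmono : StrictMono g := strictMono_nat_of_lt_succ hglt
  set δ : Ordinal := ⨆ n, g n with hδdef
  have hbdd : BddAbove (Set.range g) := ⟨omega1, by rintro x ⟨n, rfl⟩; exact le_of_lt (hgω n)⟩
  have hgle : ∀ n, g n ≤ δ := fun n => le_ciSup hbdd n
  have hgδ : ∀ n, g n < δ := fun n => lt_of_lt_of_le (hglt n) (hgle (n + 1))
  have hδω : δ < omega1 := by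
    apply Ordinal.iSup_lt_ord _ hgω
    show Cardinal.mk ℕ < (Cardinal.aleph 1).ord.cof
    rw [Cardinal.isRegular_aleph_one.cof_eq]
    simpa using Cardinal.aleph0_lt_aleph_one
  have hδ0 : δ ≠ 0 := by
    intro h
    exact absurd (h ▸ hgδ 0) (by simp)
  have hδC : δ ∈ C := by
    apply hC.2.1 δ hδω hδ0
    apply le_antisymm
    · exact csSup_le ⟨g 0, hgC 0, hgδ 0⟩ fun x hx => le_of_lt hx.2
    · apply ciSup_le
      intro n
      have : g n ≤ sSup (C ∩ Set.Iio δ) :=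
        le_csSup ⟨δ, fun x hx => le_of_lt hx.2⟩ ⟨hgC n, hgδ n⟩
      exact this
  refine ⟨δ, hδC, ?_⟩
  intro α hα
  obtain ⟨n, hn⟩ : ∃ n, α < g n := by
    by_contra h
    push_neg at h
    exact absurd (ciSup_le h) (not_le.mpr hα)
  have key : ∀ m, n ≤ m → g m ∈ (C ∩ Set.Iio δ) \ Set.Iio α := by
    intro m hm
    exact ⟨⟨hgC m, hgδ m⟩, by simpa using le_of_lt (lt_of_lt_of_le hn (hgmono.le_iff_le.mpr hm))⟩
  constructor
  · intro hsub
    have h2n : ¬ Even (2 * n + 1) := by simp [Nat.even_add_one]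
    exact hgT _ h2n (hsub (key (2 * n + 1) (by omega)))
  · exact ⟨g (2 * n), key (2 * n) (by omega), hgS _ (even_two_mul n)⟩
end

section
/- Measuring implies the negation of weak Club Guessing: if for every sequence (C_δ : δ ∈ Lim(ω₁)) of closed subsets C_δ ⊆ δ there is a club measuring it, then for every ladder system (C_δ : δ ∈ Lim(ω₁)) (each C_δ cofinal in δ of order type ω) there is a club D ⊆ ω₁ such that D ∩ C_δ is finite for every limit δ < ω₁. -/
def IsClubω₁ (C : Set Ordinal) : Prop :=
  C ⊆ Set.Iio omega1 ∧
    (∀ δ, δ < omega1 → δ ≠ 0 → sSup (C ∩ Set.Iio δ) = δ → δ ∈ C) ∧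
    ∀ α, α < omega1 → ∃ β ∈ C, α < β

/-- `D` is closed (in the order topology) as a subset of `β`. -/
def IsClosedIn (D : Set Ordinal) (β : Ordinal) : Prop :=
  ∀ δ, δ < β → δ ≠ 0 → sSup (D ∩ Set.Iio δ) = δ → δ ∈ D

/-- The principle `Measuring`: every sequence of closed subsets `A δ ⊆ δ`
(for limit `δ < ω₁`) is measured by some club. -/
def Measuring : Prop :=
  ∀ A : Ordinal → Set Ordinal,
    (∀ δ, δ < omega1 → Order.IsSuccLimit δ → A δ ⊆ Set.Iio δ ∧ IsClosedIn (A δ) δ) →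
    ∃ C, IsClubω₁ C ∧ ∀ δ ∈ C, Order.IsSuccLimit δ →
      ∃ α < δ, ((C ∩ Set.Iio δ) \ Set.Iio α ⊆ A δ ∨
        ((C ∩ Set.Iio δ) \ Set.Iio α) ∩ A δ = ∅)

/-- A ladder system: each `L δ` (for limit `δ < ω₁`) is a cofinal subset of `δ`
of order type `ω`. -/
def IsLadderSystem (L : Ordinal → Set Ordinal) : Prop :=
  ∀ δ, δ < omega1 → Order.IsSuccLimit δ →
    ∃ f : ℕ → Ordinal, StrictMono f ∧ Set.range f = L δ ∧ (∀ n, f n < δ) ∧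
      ∀ α < δ, ∃ n, α < f n

/-- The range of a strictly increasing cofinal `ω`-sequence has no limit points
below `δ`, hence is (vacuously) closed in `δ`. -/
lemma ladder_isClosedIn {δ : Ordinal} (f : ℕ → Ordinal) (hf : StrictMono f)
    (hcof : ∀ α < δ, ∃ n, α < f n) : IsClosedIn (Set.range f) δ := by
  classical
  intro γ hγδ hγ0 hsup
  exfalso
  obtain ⟨n, hn⟩ := hcof γ hγδ
  have hex : ∃ m, γ ≤ f m := ⟨n, hn.le⟩
  set N := Nat.find hex with hN
  have hmem : ∀ x ∈ Set.range f ∩ Set.Iio γ, ∃ k, k < N ∧ x = f k := by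
    rintro x ⟨⟨k, rfl⟩, hx⟩
    refine ⟨k, ?_, rfl⟩
    by_contra h
    exact absurd ((Nat.find_spec hex).trans (hf.monotone (not_lt.1 h))) (not_le.2 hx)
  rcases Nat.eq_zero_or_pos N with h0 | hpos
  · have : Set.range f ∩ Set.Iio γ = ∅ := by
      ext x
      simp only [Set.mem_empty_iff_false, iff_false]
      intro hx
      obtain ⟨k, hk, _⟩ := hmem x hx
      omega
    rw [this, csSup_empty] at hsup
    exact hγ0 hsup.symm
  · have hbd : sSup (Set.range f ∩ Set.Iio γ) ≤ f (N - 1) := by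
      apply csSup_le'
      rintro x hx
      obtain ⟨k, hk, rfl⟩ := hmem x hx
      exact hf.monotone (by omega)
    have hlt : f (N - 1) < γ := by
      have := Nat.find_min hex (m := N - 1) (by omega)
      exact not_le.1 this
    rw [hsup] at hbd
    exact absurd hbd (not_le.2 hlt)

theorem stmt1 (hM : Measuring) (L : Ordinal → Set Ordinal) (hL : IsLadderSystem L) :
    ∃ D, IsClubω₁ D ∧ ∀ δ, δ < omega1 → Order.IsSuccLimit δ → (D ∩ L δ).Finite := by
  classical
  -- Each ladder is closed in δ, so we may apply Measuring to L itself.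
  obtain ⟨C, hClub, hMeas⟩ := hM L (by
    intro δ hδ hlim
    obtain ⟨f, hf, hfr, hflt, hcof⟩ := hL δ hδ hlim
    constructor
    · rw [← hfr]; rintro x ⟨k, rfl⟩; exact hflt k
    · rw [← hfr]; exact ladder_isClosedIn f hf hcof)
  obtain ⟨hCsub, hCcl, hCunb⟩ := hClub
  -- D := set of limit points of C below ω₁
  set D : Set Ordinal := {δ | δ < omega1 ∧ δ ≠ 0 ∧ sSup (C ∩ Set.Iio δ) = δ} with hD
  have hDC : D ⊆ C := fun δ hδ => hCcl δ hδ.1 hδ.2.1 hδ.2.2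
  -- elements of D are limit ordinals
  have hDlim : ∀ δ ∈ D, Order.IsSuccLimit δ := by
    rintro δ ⟨hδ1, hδ0, hδs⟩
    refine Ordinal.isSuccLimit_iff.2 ⟨hδ0, Order.isSuccPrelimit_of_succ_lt fun β hβ => ?_⟩
    by_contra h
    have hle : sSup (C ∩ Set.Iio δ) ≤ β := by
      apply csSup_le'
      rintro x ⟨_, hx⟩
      have : x < Order.succ β := lt_of_lt_of_le hx (not_lt.1 h)
      exact Order.lt_succ_iff.1 this
    rw [hδs] at hle
    exact absurd hβ (not_lt.2 hle)
  -- D is a club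
  have hDclub : IsClubω₁ D := by
    refine ⟨fun δ hδ => hδ.1, ?_, ?_⟩
    · rintro δ hδ1 hδ0 hδs
      refine ⟨hδ1, hδ0, le_antisymm (csSup_le' ?_) ?_⟩
      · rintro x ⟨_, hx⟩; exact hx.le
      · have hne : (D ∩ Set.Iio δ).Nonempty := by
          rcases Set.eq_empty_or_nonempty (D ∩ Set.Iio δ) with h | h
          · rw [h, csSup_empty] at hδs; exact absurd hδs.symm hδ0
          · exact h
        calc δ = sSup (D ∩ Set.Iio δ) := hδs.symm
          _ ≤ sSup (C ∩ Set.Iio δ) := csSup_le_csSup ⟨δ, fun x hx => hx.2.le⟩ hne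
              (fun x hx => ⟨hDC hx.1, hx.2⟩)
    · intro α hα
      -- build an increasing ω-sequence in C above α
      have next : ∀ β : Ordinal, β < omega1 → ∃ γ ∈ C, β < γ := hCunb
      choose F hF1 hF2 using next
      let nx : Ordinal → Ordinal := fun β => if h : β < omega1 then F β h else 0
      let g : ℕ → Ordinal := fun n => n.rec (nx α) fun _ x => nx x
      have hg : ∀ n, g n ∈ C ∧ (n = 0 → α < g n) ∧ g n < g (n + 1) := by
        intro n
        induction n with
        | zero =>
          have h0 : g 0 = F α hα := by show nx α = _; simp only [nx, dif_pos hα]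
          have hmem : g 0 ∈ C := by rw [h0]; exact hF1 α hα
          have hlt : g 0 < omega1 := hCsub hmem
          refine ⟨hmem, fun _ => by rw [h0]; exact hF2 α hα, ?_⟩
          show g 0 < nx (g 0)
          simp only [nx, dif_pos hlt]
          exact hF2 _ hlt
        | succ n ih =>
          have hlt : g n < omega1 := hCsub ih.1
          have h1 : g (n + 1) = F (g n) hlt := by
            show nx (g n) = _
            simp only [nx, dif_pos hlt]
          have hmem : g (n + 1) ∈ C := by rw [h1]; exact hF1 _ hlt
          have hlt1 : g (n + 1) < omega1 := hCsub hmem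
          refine ⟨hmem, fun h => by omega, ?_⟩
          show g (n + 1) < nx (g (n + 1))
          simp only [nx, dif_pos hlt1]
          exact hF2 _ hlt1
      set δ := ⨆ n, g n with hδ
      have hδlt : δ < omega1 := by
        apply Cardinal.iSup_lt_ord_of_isRegular Cardinal.isRegular_aleph_one
        · rw [Cardinal.mk_nat]; exact Cardinal.aleph0_lt_aleph_one
        · exact fun n => hCsub (hg n).1
      have hgδ : ∀ n, g n < δ :=
        fun n => lt_of_lt_of_le (hg n).2.2 (le_ciSup (Ordinal.bddAbove_range _) (n + 1))
      have hαδ : α < δ := lt_trans ((hg 0).2.1 rfl) (hgδ 0)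
      refine ⟨δ, ⟨hδlt, ?_, ?_⟩, hαδ⟩
      · exact fun h => absurd hαδ (by rw [h]; exact (zero_le (a := α)).not_gt)
      · apply le_antisymm (csSup_le' ?_)
        · rw [hδ]
          apply ciSup_le
          intro n
          exact le_csSup ⟨δ, fun x hx => hx.2.le⟩ ⟨(hg n).1, hgδ n⟩
        · rintro x ⟨_, hx⟩; exact hx.le
  refine ⟨D, hDclub, ?_⟩
  -- the main point: D meets each ladder finitely
  intro δ hδ1 hlim
  by_contra hinf
  have hinf : (D ∩ L δ).Infinite := hinf
  obtain ⟨f, hf, hfr, hflt, hcof⟩ := hL δ hδ1 hlim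
  have hsubδ : L δ ⊆ Set.Iio δ := by rw [← hfr]; rintro x ⟨k, rfl⟩; exact hflt k
  -- D ∩ L δ is cofinal in δ
  have hcofD : ∀ α < δ, ∃ β ∈ D ∩ L δ, α < β := by
    intro α hα
    obtain ⟨N, hN⟩ := hcof α hα
    have hS : {n : ℕ | f n ∈ D ∩ L δ}.Infinite := by
      have : D ∩ L δ ⊆ f '' {n : ℕ | f n ∈ D ∩ L δ} := by
        intro x hx
        have : x ∈ Set.range f := by rw [hfr]; exact hx.2
        obtain ⟨k, rfl⟩ := this
        exact ⟨k, hx, rfl⟩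
      have := Set.Infinite.mono this hinf
      exact Set.Infinite.of_image _ this
    obtain ⟨n, hn, hNn⟩ := Set.Infinite.exists_gt hS N
    exact ⟨f n, hn, lt_trans hN (hf hNn)⟩
  -- hence δ is a limit point of C, so δ ∈ C
  have hsupC : sSup (C ∩ Set.Iio δ) = δ := by
    apply le_antisymm (csSup_le' fun x hx => hx.2.le)
    by_contra h
    obtain ⟨β, hβ, hlt⟩ := hcofD (sSup (C ∩ Set.Iio δ)) (not_le.1 h)
    have : β ≤ sSup (C ∩ Set.Iio δ) :=
      le_csSup ⟨δ, fun x hx => hx.2.le⟩ ⟨hDC hβ.1, hsubδ hβ.2⟩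
    exact absurd hlt (not_lt.2 this)
  have hδC : δ ∈ C := hCcl δ hδ1 hlim.ne_zero hsupC
  obtain ⟨α, hα, hcase⟩ := hMeas δ hδC hlim
  obtain ⟨β, hβ, hαβ⟩ := hcofD α hα
  have hβδ : β < δ := hsubδ hβ.2
  rcases hcase with htail | hdisj
  · -- tail of C below δ is contained in the ladder: contradicts β being a limit
    -- point of C (β ∈ D)
    obtain ⟨hβ1, hβ0, hβs⟩ := hβ.1
    have hβlim : Order.IsSuccLimit β := hDlim β hβ.1
    have hβr : β ∈ Set.range f := by rw [hfr]; exact hβ.2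
    obtain ⟨m, hm⟩ := hβr
    set b : Ordinal := if m = 0 then 0 else f (m - 1) with hb
    have hbound : sSup (C ∩ Set.Iio β) ≤ max α b := by
      apply csSup_le'
      rintro x ⟨hxC, hxβ⟩
      rcases lt_or_ge x α with h | h
      · exact le_max_of_le_left h.le
      · have hxL : x ∈ L δ := htail ⟨⟨hxC, lt_trans hxβ hβδ⟩, not_lt.2 h⟩
        have : x ∈ Set.range f := by rw [hfr]; exact hxL
        obtain ⟨k, rfl⟩ := this
        have hkm : k < m := by
          rw [← hf.lt_iff_lt]; rw [hm]; exact hxβ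
        have hm0 : m ≠ 0 := by omega
        refine le_max_of_le_right ?_
        rw [hb, if_neg hm0]
        exact hf.monotone (by omega)
    have hmax : max α b < β := by
      apply max_lt hαβ
      rcases Nat.eq_zero_or_pos m with h0 | hpos
      · rw [hb, if_pos h0]; exact hβlim.pos
      · rw [hb, if_neg (by omega)]
        rw [← hm]; exact hf (by omega)
    rw [hβs] at hbound
    exact absurd hbound (not_le.2 hmax)
  · -- tail of C below δ is disjoint from the ladder: but β is in both
    have : β ∈ ((C ∩ Set.Iio δ) \ Set.Iio α) ∩ L δ :=
      ⟨⟨⟨hDC hβ.1, hβδ⟩, not_lt.2 hαβ.le⟩, hβ.2⟩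
    rw [hdisj] at this
    exact this
end

section
/- M_𝔰 is false, where 𝔰 is the splitting number: there exists a family 𝒞 of closed subsets of ω₁ with |𝒞| ≤ 𝔰 such that no club C ⊆ ω₁ measures every member of 𝒞. -/
/-- A splitting family on `ω`. -/
def IsSplittingFamily (𝒳 : Set (Set ℕ)) : Prop :=
  (∀ X ∈ 𝒳, X.Infinite) ∧
    ∀ Y : Set ℕ, Y.Infinite → ∃ X ∈ 𝒳, (X ∩ Y).Infinite ∧ (Y \ X).Infinite

/-- The splitting number `𝔰`. -/
noncomputable def splittingNumber : Cardinal.{0} :=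
  sInf {c | ∃ 𝒳 : Set (Set ℕ), IsSplittingFamily 𝒳 ∧ Cardinal.mk 𝒳 = c}


lemma exists_splitting_family : IsSplittingFamily {X : Set ℕ | X.Infinite} := by
  constructor
  · intro X hX; exact hX
  · intro Y hY
    set f := hY.natEmbedding with hf
    have hinj : Function.Injective (fun n : ℕ => (f (2*n) : ℕ)) := by
      intro a b h
      have := f.injective (Subtype.coe_injective h)
      omega
    refine ⟨Set.range (fun n : ℕ => (f (2*n) : ℕ)), Set.infinite_range_of_injective hinj, ?_, ?_⟩
    · apply Set.Infinite.mono (s := Set.range (fun n : ℕ => (f (2*n) : ℕ)))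
      · intro z hz
        obtain ⟨n, rfl⟩ := hz
        exact ⟨⟨n, rfl⟩, (f (2*n)).2⟩
      · exact Set.infinite_range_of_injective hinj
    · have hinj2 : Function.Injective (fun n : ℕ => (f (2*n+1) : ℕ)) := by
        intro a b h
        have := f.injective (Subtype.coe_injective h)
        omega
      apply Set.Infinite.mono (s := Set.range (fun n : ℕ => (f (2*n+1) : ℕ)))
      · intro z hz
        obtain ⟨n, rfl⟩ := hz
        refine ⟨(f (2*n+1)).2, ?_⟩
        rintro ⟨m, hm⟩
        have := f.injective (Subtype.coe_injective hm)
        omega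
      · exact Set.infinite_range_of_injective hinj2

lemma splitting_uncountable (𝒳 : Set (Set ℕ)) (h : IsSplittingFamily 𝒳) :
    Cardinal.aleph0 < Cardinal.mk 𝒳 := by
  by_contra hle
  push_neg at hle
  have hcount : Countable ↥𝒳 := Cardinal.mk_le_aleph0_iff.mp hle
  have hne : Nonempty ↥𝒳 := by
    obtain ⟨X, hX, -⟩ := h.2 Set.univ Set.infinite_univ
    exact ⟨⟨X, hX⟩⟩
  obtain ⟨f, hf⟩ := exists_surjective_nat ↥𝒳
  set F : ℕ → Set ℕ := fun n => (f n : Set ℕ) with hF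
  classical
  set A : ℕ → Set ℕ := fun n => Nat.rec Set.univ
    (fun m Am => if (Am ∩ F m).Infinite then Am ∩ F m else Am \ F m) n with hA
  have hAsucc : ∀ n, A (n+1) = if (A n ∩ F n).Infinite then A n ∩ F n else A n \ F n :=
    fun n => rfl
  have hAinf : ∀ n, (A n).Infinite := by
    intro n; induction n with
    | zero => exact Set.infinite_univ
    | succ n ih =>
      rw [hAsucc]
      split_ifs with hsp
      · exact hsp
      · rw [Set.not_infinite] at hsp
        by_contra hfin
        rw [Set.not_infinite] at hfin
        apply ih
        apply Set.Finite.subset (hsp.union hfin)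
        intro x hx
        by_cases hxF : x ∈ F n
        · exact Or.inl ⟨hx, hxF⟩
        · exact Or.inr ⟨hx, hxF⟩
  have hstep : ∀ n, A (n+1) ⊆ A n := by
    intro n x hx
    rw [hAsucc] at hx
    split_ifs at hx with hh
    exacts [hx.1, hx.1]
  have hmono : ∀ m n, m ≤ n → A n ⊆ A m := by
    intro m n hmn
    induction hmn with
    | refl => exact subset_rfl
    | step _ ih => exact (hstep _).trans ih
  have hside : ∀ n, A (n+1) ⊆ F n ∨ A (n+1) ∩ F n = ∅ := by
    intro n
    rw [hAsucc]
    split_ifs with hh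
    · exact Or.inl Set.inter_subset_right
    · right
      ext z
      simp only [Set.mem_inter_iff, Set.mem_diff, Set.mem_empty_iff_false, iff_false]
      rintro ⟨⟨-, h2⟩, h3⟩
      exact h2 h3
  set y : ℕ → ℕ := fun n => Nat.rec (hAinf 1).nonempty.choose
    (fun m ym => ((hAinf (m+2)).exists_gt ym).choose) n with hy
  have hysucc : ∀ n, y (n+1) = ((hAinf (n+2)).exists_gt (y n)).choose := fun n => rfl
  have hymem : ∀ n, y n ∈ A (n+1) := by
    intro n
    cases n with
    | zero => exact (hAinf 1).nonempty.choose_spec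
    | succ n =>
      rw [hysucc]
      exact ((hAinf (n+2)).exists_gt (y n)).choose_spec.1
  have hyst : StrictMono y := by
    apply strictMono_nat_of_lt_succ
    intro n
    rw [hysucc]
    exact ((hAinf (n+2)).exists_gt (y n)).choose_spec.2
  obtain ⟨X, hX𝒳, hXY, hYX⟩ := h.2 (Set.range y) (Set.infinite_range_of_injective hyst.injective)
  obtain ⟨n, hn⟩ := hf ⟨X, hX𝒳⟩
  have hFn : F n = X := congrArg Subtype.val hn
  have htail : ∀ m, n ≤ m → y m ∈ A (n+1) := fun m hm =>
    hmono (n+1) (m+1) (by omega) (hymem m)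
  rcases hside n with hsub | hdis
  · apply hYX
    apply Set.Finite.subset ((Set.finite_Iio n).image y)
    rintro z ⟨⟨m, rfl⟩, hz2⟩
    by_cases hm : m < n
    · exact ⟨m, hm, rfl⟩
    · exact absurd (hFn ▸ hsub (htail m (by omega))) hz2
  · apply hXY
    apply Set.Finite.subset ((Set.finite_Iio n).image y)
    rintro z ⟨hz1, ⟨m, rfl⟩⟩
    by_cases hm : m < n
    · exact ⟨m, hm, rfl⟩
    · exfalso
      have hmem2 : y m ∈ A (n+1) ∩ F n := ⟨htail m (by omega), hFn ▸ hz1⟩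
      rw [hdis] at hmem2
      exact hmem2

lemma aleph_one_le_splittingNumber : Cardinal.aleph 1 ≤ splittingNumber := by
  have hSne : {c | ∃ 𝒳 : Set (Set ℕ), IsSplittingFamily 𝒳 ∧ Cardinal.mk 𝒳 = c}.Nonempty :=
    ⟨_, ⟨_, exists_splitting_family, rfl⟩⟩
  apply le_csInf hSne
  rintro c ⟨𝒳, h𝒳, rfl⟩
  rw [← Cardinal.succ_aleph0]
  exact Order.succ_le_of_lt (splitting_uncountable 𝒳 h𝒳)

lemma exists_cofinal_seq (δ : Ordinal) (hδ1 : δ < omega1) (hδ2 : Order.IsSuccLimit δ) :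
    ∃ e : ℕ → Ordinal, StrictMono e ∧ (∀ n, e n < δ) ∧ ∀ β, β < δ → ∃ n, β < e n := by
  have h1 : δ.card ≤ Cardinal.aleph0 := by
    have h := Cardinal.lt_ord.mp hδ1
    rwa [← Cardinal.succ_aleph0, Order.lt_succ_iff] at h
  have hcnt : Countable (Set.Iio δ) := by
    rw [← Cardinal.mk_le_aleph0_iff]
    calc Cardinal.mk (Set.Iio δ) = Cardinal.lift.{1} δ.card := Ordinal.mk_Iio_ordinal δ
    _ ≤ Cardinal.lift.{1} Cardinal.aleph0 := Cardinal.lift_le.mpr h1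
    _ = Cardinal.aleph0 := Cardinal.lift_aleph0
  have hne : Nonempty (Set.Iio δ) := ⟨⟨0, hδ2.pos⟩⟩
  obtain ⟨g, hg⟩ := exists_surjective_nat (Set.Iio δ)
  set e : ℕ → Ordinal := fun n => Nat.rec 0 (fun m em => max em (g m) + 1) n with he
  have hes : ∀ n, e (n+1) = max (e n) (g n) + 1 := fun n => rfl
  have hlt : ∀ n, e n < δ := by
    intro n; induction n with
    | zero => exact hδ2.pos
    | succ n ih =>
      rw [hes]
      have h2 : max (e n) ((g n : Ordinal)) < δ := max_lt ih (g n).2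
      have h3 := hδ2.succ_lt h2
      rwa [← Ordinal.add_one_eq_succ] at h3
  have hmono : StrictMono e := by
    apply strictMono_nat_of_lt_succ
    intro n
    rw [hes]
    have h4 : max (e n) ((g n : Ordinal)) < max (e n) (g n) + 1 := by
      rw [Ordinal.add_one_eq_succ]; exact Order.lt_succ _
    exact lt_of_le_of_lt (le_max_left _ _) h4
  refine ⟨e, hmono, hlt, ?_⟩
  intro β hβ
  obtain ⟨m, hm⟩ := hg ⟨β, hβ⟩
  refine ⟨m+1, ?_⟩
  rw [hes]
  have hβg : β = ((g m : Ordinal)) := by rw [hm]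
  rw [hβg]
  have h4 : max (e m) ((g m : Ordinal)) < max (e m) (g m) + 1 := by
    rw [Ordinal.add_one_eq_succ]; exact Order.lt_succ _
  exact lt_of_le_of_lt (le_max_right _ _) h4

lemma closed_interval_set (δ : Ordinal) (hδ1 : δ < omega1) (e : ℕ → Ordinal)
    (hmono : StrictMono e) (hlt : ∀ n, e n < δ) (hcof : ∀ β, β < δ → ∃ n, β < e n)
    (S : Set ℕ) (t : ℕ) :
    insert δ (⋃ n ∈ S, Set.Icc (e (2*n+t)) (e (2*n+1+t))) ⊆ Set.Iio omega1 ∧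
    IsClosedIn (insert δ (⋃ n ∈ S, Set.Icc (e (2*n+t)) (e (2*n+1+t)))) omega1 := by
  classical
  set U := ⋃ n ∈ S, Set.Icc (e (2*n+t)) (e (2*n+1+t)) with hU
  have hUmem : ∀ x, x ∈ U ↔ ∃ n, n ∈ S ∧ e (2*n+t) ≤ x ∧ x ≤ e (2*n+1+t) := by
    intro x
    simp only [hU, Set.mem_iUnion, Set.mem_Icc]
    tauto
  have hUsub : U ⊆ Set.Iio δ := by
    intro x hx
    obtain ⟨n, -, -, hx2⟩ := (hUmem x).mp hx
    exact lt_of_le_of_lt hx2 (hlt _)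
  have hDsub : insert δ U ⊆ Set.Iic δ := by
    intro x hx
    rcases Set.mem_insert_iff.mp hx with rfl | hx
    · exact Set.mem_Iic.mpr le_rfl
    · exact Set.mem_Iic.mpr (le_of_lt (Set.mem_Iio.mp (hUsub hx)))
  constructor
  · intro x hx
    rcases Set.mem_insert_iff.mp hx with rfl | hx
    · exact Set.mem_Iio.mpr hδ1
    · exact Set.mem_Iio.mpr (lt_trans (Set.mem_Iio.mp (hUsub hx)) hδ1)
  · intro γ hγ1 hγ2 hγ3
    have hne : (insert δ U ∩ Set.Iio γ).Nonempty := by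
      rcases Set.eq_empty_or_nonempty (insert δ U ∩ Set.Iio γ) with hemp | h
      · rw [hemp, csSup_empty] at hγ3
        exact absurd hγ3.symm hγ2
      · exact h
    have hγδ : γ ≤ δ := by
      rw [← hγ3]
      exact csSup_le hne (fun x hx => Set.mem_Iic.mp (hDsub hx.1))
    rcases eq_or_lt_of_le hγδ with rfl | hγδ
    · exact Set.mem_insert _ _
    obtain ⟨x₀, hx₀D, hx₀γ⟩ := hne
    have hx₀U : x₀ ∈ U := by
      rcases Set.mem_insert_iff.mp hx₀D with rfl | hh
      · exact absurd hx₀γ (lt_asymm hγδ)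
      · exact hh
    obtain ⟨m, hm⟩ := hcof γ hγδ
    obtain ⟨n₀, hn₀S, hn₀1, hn₀2⟩ := (hUmem x₀).mp hx₀U
    have hwit : e (2*n₀+t) < γ := lt_of_le_of_lt hn₀1 hx₀γ
    set P : ℕ → Prop := fun j => e j < γ with hP
    have hPbound : ∀ j, P j → j < m := fun j hj => hmono.lt_iff_lt.mp (hj.trans hm)
    set k := Nat.findGreatest P m with hk
    have hPk : P k := Nat.findGreatest_spec (le_of_lt (hPbound _ hwit)) hwit
    have hgek : ∀ j, k < j → γ ≤ e j := by
      intro j hj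
      by_contra hc
      push_neg at hc
      exact Nat.findGreatest_is_greatest hj (le_of_lt (hPbound j hc)) hc
    by_cases hact : ∃ n ∈ S, 2*n+t = k
    · obtain ⟨n, hnS, hnk⟩ := hact
      apply Set.mem_insert_of_mem
      apply (hUmem γ).mpr
      refine ⟨n, hnS, ?_, ?_⟩
      · rw [hnk]; exact le_of_lt hPk
      · have h5 : 2*n+1+t = k+1 := by omega
        rw [h5]; exact hgek (k+1) (lt_add_one k)
    · exfalso
      have hub : ∀ x ∈ insert δ U ∩ Set.Iio γ, x ≤ e k := by
        rintro x ⟨hxD, hxγ⟩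
        rcases Set.mem_insert_iff.mp hxD with rfl | hxU
        · exact absurd hxγ (lt_asymm hγδ)
        · obtain ⟨n, hnS, h1, h2⟩ := (hUmem x).mp hxU
          have h3 : 2*n+t ≤ k := by
            by_contra hc
            push_neg at hc
            exact absurd (lt_of_le_of_lt h1 hxγ) (not_lt.mpr (hgek _ hc))
          have h4 : 2*n+t ≠ k := fun hc => hact ⟨n, hnS, hc⟩
          have h5 : 2*n+1+t ≤ k := by omega
          exact h2.trans (hmono.monotone h5)
      have h6 := csSup_le (⟨x₀, hx₀D, hx₀γ⟩ : (insert δ U ∩ Set.Iio γ).Nonempty) hub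
      rw [hγ3] at h6
      exact absurd h6 (not_le.mpr hPk)
/-- `M_𝔰` fails: there is a family of at most `𝔰` many closed subsets of `ω₁`
which no club measures. -/
theorem stmt3 :
    ∃ (ι : Type) (Dfam : ι → Set Ordinal),
      Cardinal.mk ι ≤ splittingNumber ∧
      (∀ i, Dfam i ⊆ Set.Iio omega1 ∧ IsClosedIn (Dfam i) omega1) ∧
      ∀ C, IsClubOmega1 C →
        ¬ (∀ i, ∀ δ ∈ C, ∃ α < δ, ((C ∩ Set.Iio δ) \ Set.Iio α ⊆ Dfam i ∨
            ((C ∩ Set.Iio δ) \ Set.Iio α) ∩ Dfam i = ∅)) := by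
  classical
  have hSne : {c | ∃ 𝒳 : Set (Set ℕ), IsSplittingFamily 𝒳 ∧ Cardinal.mk 𝒳 = c}.Nonempty :=
    ⟨_, ⟨_, exists_splitting_family, rfl⟩⟩
  have hmem : splittingNumber ∈ {c | ∃ 𝒳 : Set (Set ℕ), IsSplittingFamily 𝒳 ∧ Cardinal.mk 𝒳 = c} := by
    rw [splittingNumber]; exact csInf_mem hSne
  obtain ⟨𝒳, h𝒳, h𝒳card⟩ := hmem
  -- choose cofinal sequences
  have hEex : ∀ x : omega1.ToType, ∃ e : ℕ → Ordinal,
      (Order.IsSuccLimit ((Ordinal.ToType.mk (o := omega1)).symm x : Ordinal) →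
        StrictMono e ∧ (∀ n, e n < ((Ordinal.ToType.mk (o := omega1)).symm x : Ordinal)) ∧
        ∀ β, β < ((Ordinal.ToType.mk (o := omega1)).symm x : Ordinal) → ∃ n, β < e n) := by
    intro x
    by_cases h : Order.IsSuccLimit ((Ordinal.ToType.mk (o := omega1)).symm x : Ordinal)
    · obtain ⟨e, he⟩ := exists_cofinal_seq _ ((Ordinal.ToType.mk (o := omega1)).symm x).2 h
      exact ⟨e, fun _ => he⟩
    · exact ⟨fun _ => 0, fun hl => absurd hl h⟩
  choose E hE using hEex
  refine ⟨↥𝒳 × omega1.ToType × Bool,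
    fun i => if h : Order.IsSuccLimit ((Ordinal.ToType.mk (o := omega1)).symm i.2.1 : Ordinal) then
      insert ((Ordinal.ToType.mk (o := omega1)).symm i.2.1 : Ordinal)
        (⋃ n ∈ (i.1 : Set ℕ), Set.Icc (E i.2.1 (2*n + (cond i.2.2 1 0)))
          (E i.2.1 (2*n+1+ (cond i.2.2 1 0))))
      else ∅, ?_, ?_, ?_⟩
  · -- cardinality
    have h2le : (2 : Cardinal) ≤ Cardinal.aleph 1 := by
      refine le_trans ?_ (le_of_lt Cardinal.aleph0_lt_aleph_one)
      exact_mod_cast le_of_lt (Cardinal.nat_lt_aleph0 2)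
    have hℵ₀s : Cardinal.aleph0 ≤ Cardinal.mk 𝒳 := by
      rw [h𝒳card]
      exact le_trans (le_of_lt Cardinal.aleph0_lt_aleph_one) aleph_one_le_splittingNumber
    have hℵ₁s : Cardinal.aleph 1 ≤ Cardinal.mk 𝒳 := by
      rw [h𝒳card]; exact aleph_one_le_splittingNumber
    have hprod : Cardinal.mk (↥𝒳 × omega1.ToType × Bool)
        = Cardinal.mk 𝒳 * (Cardinal.aleph 1 * 2) := by
      rw [Cardinal.mk_prod, Cardinal.mk_prod, Cardinal.mk_bool, Cardinal.mk_toType]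
      have : omega1.card = Cardinal.aleph 1 := Cardinal.card_ord _
      rw [this]
      simp [Cardinal.lift_id]
    rw [hprod]
    rw [Cardinal.mul_eq_left (le_of_lt Cardinal.aleph0_lt_aleph_one) h2le two_ne_zero]
    rw [Cardinal.mul_eq_left hℵ₀s hℵ₁s (ne_of_gt (Cardinal.aleph_pos 1))]
    rw [h𝒳card]
  · -- closedness
    rintro ⟨X, x, b⟩
    dsimp only
    split_ifs with h
    · exact closed_interval_set _ ((Ordinal.ToType.mk (o := omega1)).symm x).2 _
        ((hE x h).1) ((hE x h).2.1) ((hE x h).2.2) _ _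
    · refine ⟨Set.empty_subset _, ?_⟩
      intro γ hγ1 hγ2 hγ3
      rw [Set.empty_inter, csSup_empty] at hγ3
      exact absurd hγ3.symm hγ2
  · -- main argument
    intro C hC hmeas
    obtain ⟨hCsub, hCclosed, hCunbdd⟩ := hC
    have homega1pos : (0 : Ordinal) < omega1 :=
      Cardinal.lt_ord.mpr (by simpa using Cardinal.aleph_pos 1)
    have hstep : ∀ β : Ordinal, β ∈ C → ∃ β', β' ∈ C ∧ β < β' := by
      intro β hβ
      obtain ⟨β', h1, h2⟩ := hCunbdd β (hCsub hβ)
      exact ⟨β', h1, h2⟩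
    obtain ⟨β₀, hβ₀, -⟩ := hCunbdd 0 homega1pos
    set f : ℕ → {β : Ordinal // β ∈ C} := fun n => Nat.rec ⟨β₀, hβ₀⟩
      (fun _ p => ⟨(hstep p.1 p.2).choose, (hstep p.1 p.2).choose_spec.1⟩) n with hfdef
    have hf : ∀ n, (f n : Ordinal) < f (n+1) := fun n =>
      (hstep (f n).1 (f n).2).choose_spec.2
    set δ := iSup (fun n => (f n : Ordinal)) with hδdef
    have hbddf : BddAbove (Set.range fun n => (f n : Ordinal)) := Ordinal.bddAbove_range _
    have hfleδ : ∀ n, (f n : Ordinal) ≤ δ := fun n => le_ciSup hbddf n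
    have hfltδ : ∀ n, (f n : Ordinal) < δ := fun n => lt_of_lt_of_le (hf n) (hfleδ (n+1))
    have hδω1 : δ < omega1 := by
      have h : ∀ n, (f n : Ordinal) < omega1 := fun n => hCsub (f n).2
      rw [omega1, Cardinal.ord_aleph] at h ⊢; exact Ordinal.iSup_lt_omega_one h
    have hδ0 : δ ≠ 0 := (lt_of_le_of_lt zero_le (hfltδ 0)).ne'
    have hδC : δ ∈ C := by
      apply hCclosed δ hδω1 hδ0
      apply le_antisymm
      · apply csSup_le (⟨(f 0 : Ordinal), (f 0).2, hfltδ 0⟩ : (C ∩ Set.Iio δ).Nonempty)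
        rintro z ⟨-, hz⟩
        exact le_of_lt hz
      · apply ciSup_le
        intro n
        apply le_csSup ⟨δ, fun z hz => le_of_lt hz.2⟩
        exact ⟨(f n).2, hfltδ n⟩
    have hδlim : Order.IsSuccLimit δ := by
      refine Ordinal.isSuccLimit_iff.mpr ⟨hδ0, Order.isSuccPrelimit_of_succ_lt fun β hβ => ?_⟩
      obtain ⟨n, hn⟩ := (lt_ciSup_iff hbddf).mp hβ
      exact lt_of_le_of_lt (Order.succ_le_of_lt hn) (hfltδ n)
    set x := (Ordinal.ToType.mk (o := omega1)) ⟨δ, hδω1⟩ with hxdef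
    have hxs : ((Ordinal.ToType.mk (o := omega1)).symm x : Ordinal) = δ := by
      rw [hxdef, OrderIso.symm_apply_apply]
    have hEprop := hE x (by rw [hxs]; exact hδlim)
    rw [hxs] at hEprop
    obtain ⟨hemono, helt, hecof⟩ := hEprop
    set e := E x with hedef
    set K := {k : ℕ | (C ∩ Set.Ico (e k) (e (k+1))).Nonempty} with hKdef
    have hKinf : K.Infinite := by
      apply Set.infinite_of_forall_exists_gt
      intro a
      obtain ⟨n, hn⟩ := (lt_ciSup_iff hbddf).mp (helt (a+1))
      have hγδ : (f n : Ordinal) < δ := hfltδ n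
      obtain ⟨j, hj⟩ := hecof _ hγδ
      set P : ℕ → Prop := fun i => e i ≤ (f n : Ordinal) with hPdef
      have hPwit : P (a+1) := le_of_lt hn
      have hbound : ∀ i, P i → i < j := fun i hi =>
        hemono.lt_iff_lt.mp (lt_of_le_of_lt hi hj)
      set k := Nat.findGreatest P j with hkdef
      have hPk : P k := Nat.findGreatest_spec (le_of_lt (hbound _ hPwit)) hPwit
      have hku : (f n : Ordinal) < e (k+1) := by
        by_contra hc
        push_neg at hc
        exact Nat.findGreatest_is_greatest (lt_add_one k) (le_of_lt (hbound _ hc)) hc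
      have hak : a + 1 ≤ k := Nat.le_findGreatest (le_of_lt (hbound _ hPwit)) hPwit
      exact ⟨k, ⟨(f n : Ordinal), (f n).2, hPk, hku⟩, by omega⟩
    have key : ∀ b : Bool, {n : ℕ | 2*n + (cond b 1 0) ∈ K}.Infinite → False := by
      intro b hYinf
      obtain ⟨X, hX𝒳, hXY, hYX⟩ := h𝒳.2 _ hYinf
      have hm := hmeas (⟨X, hX𝒳⟩, x, b) δ hδC
      simp only [hxs] at hm
      rw [dif_pos hδlim] at hm
      obtain ⟨α, hαδ, hcase⟩ := hm
      obtain ⟨j, hj⟩ := hecof α hαδ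
      rcases hcase with hsub | hdis
      · obtain ⟨n, hnmem, hjn⟩ := hYX.exists_gt j
        obtain ⟨γ, hγC, hγ1, hγ2⟩ := hnmem.1
        rw [show (2*n + cond b 1 0) + 1 = 2*n+1+ cond b 1 0 by omega] at hγ2
        have hαγ : α < γ :=
          lt_of_lt_of_le (lt_of_lt_of_le hj (hemono.monotone (by omega : j ≤ 2*n + cond b 1 0))) hγ1
        have hγδ : γ < δ := lt_trans hγ2 (helt _)
        have hγtail : γ ∈ (C ∩ Set.Iio δ) \ Set.Iio α :=
          ⟨⟨hγC, hγδ⟩, not_lt.mpr (le_of_lt hαγ)⟩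
        have hγD := hsub hγtail
        rcases Set.mem_insert_iff.mp hγD with hh | hh
        · exact absurd hh (ne_of_lt hγδ)
        · obtain ⟨m, hmX, hm1, hm2⟩ := Set.mem_iUnion₂.mp hh
          have e1 : 2*m + cond b 1 0 < 2*n+1 + cond b 1 0 :=
            hemono.lt_iff_lt.mp (lt_of_le_of_lt hm1 hγ2)
          have e2 : 2*n + cond b 1 0 ≤ 2*m+1 + cond b 1 0 :=
            hemono.le_iff_le.mp (le_trans hγ1 hm2)
          have hmn : m = n := by omega
          exact hnmem.2 (hmn ▸ hmX)
      · obtain ⟨n, hnmem, hjn⟩ := hXY.exists_gt j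
        obtain ⟨γ, hγC, hγ1, hγ2⟩ := hnmem.2
        rw [show (2*n + cond b 1 0) + 1 = 2*n+1+ cond b 1 0 by omega] at hγ2
        have hαγ : α < γ :=
          lt_of_lt_of_le (lt_of_lt_of_le hj (hemono.monotone (by omega : j ≤ 2*n + cond b 1 0))) hγ1
        have hγδ : γ < δ := lt_trans hγ2 (helt _)
        have hγ3 : γ ∈ ((C ∩ Set.Iio δ) \ Set.Iio α) ∩
            insert δ (⋃ m ∈ X, Set.Icc (e (2*m + cond b 1 0)) (e (2*m+1 + cond b 1 0))) := by
          refine ⟨⟨⟨hγC, hγδ⟩, not_lt.mpr (le_of_lt hαγ)⟩, ?_⟩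
          exact Set.mem_insert_of_mem _ (Set.mem_biUnion hnmem.1 ⟨hγ1, le_of_lt hγ2⟩)
        rw [hdis] at hγ3
        exact hγ3
    have hpar : {n : ℕ | 2*n ∈ K}.Infinite ∨ {n : ℕ | 2*n+1 ∈ K}.Infinite := by
      by_contra hc
      push_neg at hc
      apply hKinf
      have hsubK : K ⊆ (fun n => 2*n) '' {n | 2*n ∈ K} ∪ (fun n => 2*n+1) '' {n | 2*n+1 ∈ K} := by
        intro k hk
        rcases Nat.even_or_odd k with ⟨n, hn⟩ | ⟨n, hn⟩
        · refine Or.inl ⟨n, ?_, ?_⟩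
          · show 2*n ∈ K
            rw [show 2*n = k by omega]; exact hk
          · show 2*n = k; omega
        · refine Or.inr ⟨n, ?_, ?_⟩
          · show 2*n+1 ∈ K
            rw [show 2*n+1 = k by omega]; exact hk
          · show 2*n+1 = k; omega
      exact Set.Finite.subset
        ((hc.1.image _).union (hc.2.image _)) hsubK
    rcases hpar with h | h
    · exact key false h
    · exact key true h
end

section
/- Let (C_δ : δ ∈ Lim(ω₁)) be a ladder system where each C_δ(n) (the n-th element in the increasing enumeration of C_δ) is a successor ordinal, let X ⊆ ω be infinite and co-infinite witnessing splitting of Y = {n : [C_δ(n), C_δ(n+1)) ∩ D ≠ ∅} for a club D and δ a limit point of D, and set Z = ⋃{[C_δ(n), C_δ(n+1)) : n ∈ X} ∪ {δ}. If X ∩ Y and Y \ X are both infinite, then Z ∩ D and D \ Z are both cofinal in δ. -/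
theorem stmt4 (δ : Ordinal) (hδ : δ < omega1) (hδlim : Order.IsSuccLimit δ)
    (f : ℕ → Ordinal) (hmono : StrictMono f) (hfδ : ∀ n, f n < δ)
    (hcof : ∀ α < δ, ∃ n, α < f n)
    (hsucc : ∀ n, ∃ γ, f n = γ + 1)
    (D : Set Ordinal) (hD : IsClubOmega1 D)
    (hlp : sSup (D ∩ Set.Iio δ) = δ)
    (X : Set ℕ) (hXinf : X.Infinite) (hXcoinf : (Set.univ \ X).Infinite)
    (Y : Set ℕ) (hY : Y = {n | (Set.Ico (f n) (f (n + 1)) ∩ D).Nonempty})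
    (Z : Set Ordinal) (hZ : Z = (⋃ n ∈ X, Set.Ico (f n) (f (n + 1))) ∪ {δ})
    (h1 : (X ∩ Y).Infinite) (h2 : (Y \ X).Infinite) :
    (∀ α < δ, ∃ ξ ∈ Z ∩ D, α < ξ ∧ ξ < δ) ∧
      (∀ α < δ, ∃ ξ ∈ D \ Z, α < ξ ∧ ξ < δ) := by
  -- disjointness of intervals
  have hdisj : ∀ m n ξ, ξ ∈ Set.Ico (f m) (f (m + 1)) →
      ξ ∈ Set.Ico (f n) (f (n + 1)) → m = n := by
    intro m n ξ hm hn
    by_contra hne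
    rcases Nat.lt_or_lt_of_ne hne with h | h
    · exact absurd (lt_of_lt_of_le hm.2 (hmono.monotone h)) (not_lt.2 hn.1)
    · exact absurd (lt_of_lt_of_le hn.2 (hmono.monotone h)) (not_lt.2 hm.1)
  constructor
  · intro α hα
    obtain ⟨m, hm⟩ := hcof α hα
    obtain ⟨n, hn, hnm⟩ := h1.exists_gt m
    have hnY : n ∈ Y := hn.2
    rw [hY] at hnY
    obtain ⟨ξ, hξI, hξD⟩ := hnY
    refine ⟨ξ, ⟨?_, hξD⟩, ?_, lt_trans hξI.2 (hfδ _)⟩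
    · rw [hZ]
      exact Or.inl (Set.mem_biUnion hn.1 hξI)
    · exact lt_of_lt_of_le (lt_of_lt_of_le hm (hmono.monotone hnm.le)) hξI.1
  · intro α hα
    obtain ⟨m, hm⟩ := hcof α hα
    obtain ⟨n, hn, hnm⟩ := h2.exists_gt m
    have hnY : n ∈ Y := hn.1
    rw [hY] at hnY
    obtain ⟨ξ, hξI, hξD⟩ := hnY
    have hξδ : ξ < δ := lt_trans hξI.2 (hfδ _)
    refine ⟨ξ, ⟨hξD, ?_⟩, ?_, hξδ⟩
    · rw [hZ]
      rintro (hmem | hmem)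
      · obtain ⟨k, hk, hkI⟩ := Set.mem_iUnion₂.1 hmem
        exact hn.2 ((hdisj n k ξ hξI hkI) ▸ hk)
      · exact absurd hmem (ne_of_lt hξδ)
    · exact lt_of_lt_of_le (lt_of_lt_of_le hm (hmono.monotone hnm.le)) hξI.1
end

section
/- Assume ZF and that the club filter 𝒞_{ω₁} on ω₁ is a normal filter. Suppose (X_δ : δ ∈ Lim(ω₁)) is a sequence with each X_δ ⊆ δ, such that for all α < ω₁, either W_α⁰ = {δ < ω₁ : α ∉ X_δ} ∈ 𝒞_{ω₁} or W_α¹ = {δ < ω₁ : α ∈ X_δ} ∈ 𝒞_{ω₁}. Then there is a set W* ∈ 𝒞_{ω₁} such that X_{δ₀} = X_{δ₁} ∩ δ₀ for all δ₀ < δ₁ in W*. -/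
/-- The collection `𝒞_{ω₁}` of subsets of `ω₁` containing a club. -/
def ClubFilter : Set (Set Ordinal) :=
  {X | ∃ C, IsClubω₁ C ∧ C ⊆ X}

/-- Normality of `𝒞_{ω₁}`: closure under diagonal intersections. -/
def ClubFilterNormal : Prop :=
  ∀ W : Ordinal → Set Ordinal, (∀ α, α < omega1 → W α ∈ ClubFilter) →
    {δ | δ < omega1 ∧ ∀ α < δ, δ ∈ W α} ∈ ClubFilter

lemma clubFilter_pos {S : Set Ordinal} (hS : S ∈ ClubFilter) :
    {δ ∈ S | 0 < δ} ∈ ClubFilter := by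
  obtain ⟨C, ⟨hsub, hcl, hub⟩, hCS⟩ := hS
  refine ⟨C \ {0}, ⟨fun x hx => hsub hx.1, ?_, ?_⟩, ?_⟩
  · intro δ hδ hδ0 hsup
    have hne : ((C \ {0}) ∩ Set.Iio δ).Nonempty := by
      by_contra h
      rw [Set.not_nonempty_iff_eq_empty] at h
      rw [h] at hsup
      simp at hsup
      exact hδ0 hsup.symm
    have h1 : sSup (C ∩ Set.Iio δ) ≤ δ :=
      csSup_le' (fun x hx => le_of_lt hx.2)
    have h2 : δ ≤ sSup (C ∩ Set.Iio δ) := by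
      calc δ = sSup ((C \ {0}) ∩ Set.Iio δ) := hsup.symm
        _ ≤ sSup (C ∩ Set.Iio δ) :=
          csSup_le_csSup ⟨δ, fun x hx => le_of_lt hx.2⟩ hne
            (fun x hx => ⟨hx.1.1, hx.2⟩)
    exact ⟨hcl δ hδ hδ0 (le_antisymm h1 h2), hδ0⟩
  · intro α hα
    obtain ⟨β, hβC, hβ⟩ := hub α hα
    refine ⟨β, ⟨hβC, ?_⟩, hβ⟩
    simp only [Set.mem_singleton_iff]
    rintro rfl
    exact (not_lt_zero (a := α)) hβ
  · rintro x ⟨hx, hx0⟩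
    exact ⟨hCS hx, pos_iff_ne_zero.2 hx0⟩

theorem stmt5 (hnormal : ClubFilterNormal)
    (X : Ordinal → Set Ordinal)
    (hX : ∀ δ, δ < omega1 → Order.IsSuccLimit δ → X δ ⊆ Set.Iio δ)
    (hdich : ∀ α, α < omega1 →
      {δ | δ < omega1 ∧ Order.IsSuccLimit δ ∧ α ∉ X δ} ∈ ClubFilter ∨
      {δ | δ < omega1 ∧ Order.IsSuccLimit δ ∧ α ∈ X δ} ∈ ClubFilter) :
    ∃ W ∈ ClubFilter, ∀ δ₀ ∈ W, ∀ δ₁ ∈ W, δ₀ < δ₁ → X δ₀ = X δ₁ ∩ Set.Iio δ₀ := by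
  classical
  set W : Ordinal → Set Ordinal := fun α =>
    if {δ | δ < omega1 ∧ Order.IsSuccLimit δ ∧ α ∉ X δ} ∈ ClubFilter then
      {δ | δ < omega1 ∧ Order.IsSuccLimit δ ∧ α ∉ X δ}
    else {δ | δ < omega1 ∧ Order.IsSuccLimit δ ∧ α ∈ X δ} with hWdef
  have hW : ∀ α, α < omega1 → W α ∈ ClubFilter := by
    intro α hα
    simp only [hWdef]
    split
    · assumption
    · rcases hdich α hα with h | h
      · contradiction
      · exact h
  have hWlim : ∀ α δ, δ ∈ W α → δ < omega1 ∧ Order.IsSuccLimit δ := by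
    intro α δ hδ
    simp only [hWdef] at hδ
    split at hδ <;> exact ⟨hδ.1, hδ.2.1⟩
  have hWeq : ∀ α δ₀ δ₁, δ₀ ∈ W α → δ₁ ∈ W α → (α ∈ X δ₀ ↔ α ∈ X δ₁) := by
    intro α δ₀ δ₁ h₀ h₁
    simp only [hWdef] at h₀ h₁
    split at h₀ <;> split at h₁ <;>
      first
      | exact iff_of_false h₀.2.2 h₁.2.2
      | exact iff_of_true h₀.2.2 h₁.2.2
      | contradiction
  have hD := hnormal W hW
  refine ⟨{δ ∈ {δ | δ < omega1 ∧ ∀ α < δ, δ ∈ W α} | 0 < δ}, clubFilter_pos hD, ?_⟩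
  rintro δ₀ ⟨⟨hδ₀ω, hδ₀W⟩, hδ₀0⟩ δ₁ ⟨⟨hδ₁ω, hδ₁W⟩, hδ₁0⟩ hlt
  have hlim₀ : Order.IsSuccLimit δ₀ := (hWlim 0 δ₀ (hδ₀W 0 hδ₀0)).2
  have hlim₁ : Order.IsSuccLimit δ₁ := (hWlim 0 δ₁ (hδ₁W 0 hδ₁0)).2
  ext α
  constructor
  · intro hα
    have hαlt : α < δ₀ := hX δ₀ hδ₀ω hlim₀ hα
    exact ⟨(hWeq α δ₀ δ₁ (hδ₀W α hαlt) (hδ₁W α (hαlt.trans hlt))).1 hα, hαlt⟩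
  · rintro ⟨hα, hαlt⟩
    exact (hWeq α δ₀ δ₁ (hδ₀W α hαlt) (hδ₁W α (hαlt.trans hlt))).2 hα
end

section
/- M_{ℵ₀} holds in ZFC: for every countable family 𝒞 of closed subsets of ω₁ there is a club C ⊆ ω₁ such that for every D ∈ 𝒞 and every δ ∈ C there is α < δ with either (C ∩ δ) \ α ⊆ D or ((C ∩ δ) \ α) ∩ D = ∅. -/
lemma omega1_isLimit : omega1 ≠ 0 ∧ ∀ a < omega1, a + 1 < omega1 := by
  have h := Cardinal.isSuccLimit_ord (Cardinal.aleph0_le_aleph 1)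
  refine ⟨h.ne_bot, fun a ha => ?_⟩
  rw [← Order.succ_eq_add_one]; exact h.succ_lt ha

lemma countable_iSup_lt (x : ℕ → Ordinal.{0}) (h : ∀ n, x n < omega1) :
    (⨆ n, x n) < omega1 :=
  Cardinal.iSup_lt_ord_of_isRegular Cardinal.isRegular_aleph_one
    (by rw [Cardinal.mk_nat]; exact Cardinal.aleph0_lt_aleph_one) h

lemma isClub_Iio : IsClubOmega1 (Set.Iio omega1) := by
  refine ⟨le_refl _, fun δ hδ _ _ => hδ, fun α hα => ⟨α + 1, omega1_isLimit.2 α hα, lt_add_one α⟩⟩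

lemma isClub_Ioo {β : Ordinal} (hβ : β < omega1) : IsClubOmega1 (Set.Ioo β omega1) := by
  refine ⟨fun x hx => hx.2, ?_, ?_⟩
  · intro δ hδ hδ0 hsup
    refine ⟨?_, hδ⟩
    by_contra hle
    push_neg at hle
    have : Set.Ioo β omega1 ∩ Set.Iio δ = ∅ := by
      ext x; simp only [Set.mem_inter_iff, Set.mem_Ioo, Set.mem_Iio, Set.mem_empty_iff_false,
        iff_false]
      rintro ⟨⟨h1, _⟩, h3⟩
      exact absurd (h1.trans h3) (not_lt.mpr hle)
    rw [this, csSup_empty] at hsup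
    exact hδ0 hsup.symm
  · intro α hα
    refine ⟨max α β + 1, ⟨?_, ?_⟩, ?_⟩
    · exact lt_of_le_of_lt (le_max_right α β) (lt_add_one _)
    · exact omega1_isLimit.2 _ (max_lt hα hβ)
    · exact lt_of_le_of_lt (le_max_left α β) (lt_add_one _)

lemma isClub_iInter (F : ℕ → Set Ordinal.{0}) (h : ∀ n, IsClubOmega1 (F n)) :
    IsClubOmega1 (⋂ n, F n) := by
  classical
  have hsub : ∀ n, F n ⊆ Set.Iio omega1 := fun n => (h n).1
  have hub : ∀ n a, a < omega1 → ∃ b ∈ F n, a < b := fun n a ha => (h n).2.2 a ha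
  refine ⟨fun x hx => hsub 0 (Set.mem_iInter.mp hx 0), ?_, ?_⟩
  · intro δ hδ hδ0 hsup
    have hSne : ((⋂ n, F n) ∩ Set.Iio δ).Nonempty := by
      by_contra hne
      rw [Set.not_nonempty_iff_eq_empty] at hne
      rw [hne, csSup_empty] at hsup
      exact hδ0 hsup.symm
    refine Set.mem_iInter.mpr fun n => (h n).2.1 δ hδ hδ0 ?_
    have hmono : ((⋂ n, F n) ∩ Set.Iio δ) ⊆ (F n ∩ Set.Iio δ) :=
      Set.inter_subset_inter_left _ (Set.iInter_subset _ n)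
    refine le_antisymm (csSup_le (hSne.mono hmono) fun y hy => hy.2.le) ?_
    calc δ = sSup ((⋂ n, F n) ∩ Set.Iio δ) := hsup.symm
      _ ≤ sSup (F n ∩ Set.Iio δ) := csSup_le_csSup ⟨δ, fun y hy => hy.2.le⟩ hSne hmono
  · intro α hα
    set nxt : ℕ → Ordinal → Ordinal := fun n a =>
      if ha : a < omega1 then (hub n a ha).choose else 0 with hnxtdef
    have hnxt : ∀ n a, (ha : a < omega1) → nxt n a ∈ F n ∧ a < nxt n a := by
      intro n a ha
      rw [hnxtdef]
      simp only [dif_pos ha]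
      obtain ⟨h1, h2⟩ := (hub n a ha).choose_spec
      exact ⟨h1, h2⟩
    obtain ⟨x, hx0, hxs⟩ : ∃ x : ℕ → Ordinal,
        x 0 = α ∧ ∀ k, x (k + 1) = nxt k.unpair.1 (x k) :=
      ⟨fun k => Nat.rec α (fun k xk => nxt k.unpair.1 xk) k, rfl, fun k => rfl⟩
    have hxlt : ∀ k, x k < omega1 := by
      intro k
      induction k with
      | zero => rwa [hx0]
      | succ k ih => rw [hxs]; exact hsub _ (hnxt _ _ ih).1
    have hmono : StrictMono x :=
      strictMono_nat_of_lt_succ fun k => by rw [hxs]; exact (hnxt _ _ (hxlt k)).2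
    set δ := ⨆ k, x k with hδdef
    have hδlt : δ < omega1 := countable_iSup_lt x hxlt
    have hlt : ∀ k, x k < δ := fun k =>
      lt_of_lt_of_le (hmono (Nat.lt_succ_self k)) (Ordinal.le_iSup x (k + 1))
    have hαδ : α < δ := hx0 ▸ hlt 0
    have hδ0 : δ ≠ 0 := fun h0 => by simp [h0] at hαδ
    have helem : ∀ n k, x (Nat.pair n k + 1) ∈ F n ∩ Set.Iio δ := by
      intro n k
      refine ⟨?_, hlt _⟩
      rw [hxs, Nat.unpair_pair]
      exact (hnxt n _ (hxlt (Nat.pair n k))).1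
    have hmem : ∀ n, δ ∈ F n := by
      intro n
      apply (h n).2.1 δ hδlt hδ0
      refine le_antisymm (csSup_le ⟨_, helem n 0⟩ fun y hy => hy.2.le) ?_
      rw [hδdef]
      refine Ordinal.iSup_le fun k => ?_
      calc x k ≤ x (Nat.pair n k) := hmono.monotone (Nat.right_le_pair n k)
        _ ≤ x (Nat.pair n k + 1) := (hmono (Nat.lt_succ_self _)).le
        _ ≤ sSup (F n ∩ Set.Iio δ) := le_csSup ⟨δ, fun y hy => hy.2.le⟩ (helem n k)
    exact ⟨δ, Set.mem_iInter.mpr hmem, hαδ⟩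

theorem stmt10 (𝒞 : Set (Set Ordinal)) (hcnt : 𝒞.Countable)
    (hcl : ∀ D ∈ 𝒞, D ⊆ Set.Iio omega1 ∧ IsClosedIn D omega1) :
    ∃ C, IsClubOmega1 C ∧ ∀ D ∈ 𝒞, ∀ δ ∈ C,
      ∃ α < δ, ((C ∩ Set.Iio δ) \ Set.Iio α ⊆ D ∨
        ((C ∩ Set.Iio δ) \ Set.Iio α) ∩ D = ∅) := by
  classical
  obtain ⟨e, he⟩ : ∃ e : ℕ → Set Ordinal, insert ∅ 𝒞 = Set.range e :=
    (hcnt.insert ∅).exists_eq_range (Set.insert_nonempty _ _)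
  have heC : ∀ n, e n = ∅ ∨ e n ∈ 𝒞 := fun n => by
    have : e n ∈ insert ∅ 𝒞 := he ▸ Set.mem_range_self n
    simpa using this
  have hesub : ∀ n, e n ⊆ Set.Iio omega1 := fun n =>
    (heC n).elim (fun h => by simp [h]) fun h => (hcl _ h).1
  have hecl : ∀ n, IsClosedIn (e n) omega1 := by
    intro n
    rcases heC n with h | h
    · intro δ hδ hδ0 hsup
      rw [h] at hsup ⊢
      rw [Set.empty_inter, csSup_empty] at hsup
      exact absurd hsup.symm hδ0
    · exact (hcl _ h).2
  have hesup : ∀ n, sSup (e n) ≤ omega1 := fun n =>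
    csSup_le' fun x hx => (hesub n hx).le
  set bnd : ℕ → Ordinal := fun n =>
    if sSup (e n) < omega1 then sSup (e n) + 1 else 0 with hbnd
  have hbndlt : ∀ n, bnd n < omega1 := by
    intro n
    by_cases hn : sSup (e n) < omega1
    · simp only [hbnd, if_pos hn]
      exact omega1_isLimit.2 _ hn
    · simp only [hbnd, if_neg hn]
      exact pos_iff_ne_zero.2 omega1_isLimit.1
  set βs : Ordinal := ⨆ n, bnd n with hβs
  have hβslt : βs < omega1 := countable_iSup_lt bnd hbndlt
  set g : ℕ → Set Ordinal := fun n =>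
    if sSup (e n) = omega1 then e n else Set.Iio omega1 with hg
  set F : ℕ → Set Ordinal := fun n => Nat.rec (Set.Ioo βs omega1) (fun k _ => g k) n with hF
  have hFclub : ∀ n, IsClubOmega1 (F n) := by
    intro n
    match n with
    | 0 => exact isClub_Ioo hβslt
    | (k + 1) =>
      show IsClubOmega1 (g k)
      by_cases hsk : sSup (e k) = omega1
      · simp only [hg, if_pos hsk]
        refine ⟨hesub k, hecl k, ?_⟩
        intro α hα
        by_contra hno
        push_neg at hno
        have hne : (e k).Nonempty := by
          rcases Set.eq_empty_or_nonempty (e k) with h | h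
          · exfalso
            rw [h, csSup_empty] at hsk
            exact omega1_isLimit.1 (by simpa using hsk.symm)
          · exact h
        have : sSup (e k) ≤ α := csSup_le hne fun b hb => hno b hb
        rw [hsk] at this
        exact absurd hα (not_lt.mpr this)
      · simp only [hg, if_neg hsk]
        exact isClub_Iio
  set C := ⋂ n, F n with hC
  have hCclub : IsClubOmega1 C := isClub_iInter F hFclub
  refine ⟨C, hCclub, ?_⟩
  intro D hD δ hδ
  have hδ0 : δ ∈ Set.Ioo βs omega1 := Set.mem_iInter.mp hδ 0
  obtain ⟨n, hn⟩ : ∃ n, e n = D := by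
    have : D ∈ Set.range e := he ▸ Set.mem_insert_iff.mpr (Or.inr hD)
    exact this
  by_cases hsk : sSup (e n) = omega1
  · refine ⟨0, lt_of_le_of_lt (zero_le : (0 : Ordinal) ≤ βs) hδ0.1, Or.inl ?_⟩
    intro x hx
    have hxC : x ∈ C := hx.1.1
    have : x ∈ g n := Set.mem_iInter.mp hxC (n + 1)
    simp only [hg, if_pos hsk] at this
    rwa [hn] at this
  · have hslt : sSup (e n) < omega1 := lt_of_le_of_ne (hesup n) hsk
    refine ⟨sSup (e n) + 1, ?_, Or.inr ?_⟩
    · calc sSup (e n) + 1 = bnd n := by simp only [hbnd, if_pos hslt]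
        _ ≤ βs := Ordinal.le_iSup bnd n
        _ < δ := hδ0.1
    · rw [Set.eq_empty_iff_forall_notMem]
      rintro x ⟨⟨_, hxna⟩, hxD⟩
      rw [Set.mem_Iio, not_lt] at hxna
      have hxle : x ≤ sSup (e n) := le_csSup ⟨omega1, fun y hy => (hesub n hy).le⟩
        (hn ▸ hxD)
      exact absurd (lt_of_lt_of_le (lt_add_one _) hxna) (not_lt.mpr hxle)
end

section
/- Bounding sequences exist and can be refined: let β < κ be a limit ordinal, α₀ < β, and 𝒩 a finite closed symmetric system of elementary submodels of H(κ). Then (i) there is a bounding sequence for 𝒩 relative to α₀ below β; (ii) if Z ⊆ β is cofinal in β with α₀ + 1 ∈ Z, there is a bounding sequence all of whose members are in Z; (iii) the increasing enumeration of any infinite subsequence of a bounding sequence whose first member is α₀ + 1 is again a bounding sequence. -/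
open FirstOrder

/-- The von Neumann ordinal in `ZFSet` corresponding to an ordinal (as a `PSet`). -/
noncomputable def ordToPSet : Ordinal.{0} → PSet.{0} :=
  fun o =>
    letI : IsWellOrder o.ToType (· < ·) := isWellOrder_lt
    ⟨o.ToType, fun i => ordToPSet (Ordinal.typein (α := o.ToType) (· < ·) i)⟩
termination_by o => o
decreasing_by exact Ordinal.typein_lt_self i

/-- The von Neumann ordinal in `ZFSet` corresponding to an ordinal. -/
noncomputable def ordToZF (o : Ordinal.{0}) : ZFSet.{0} :=
  ZFSet.mk (ordToPSet o)

/-- `H(κ)`: sets hereditarily of cardinality less than `κ`. -/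
def HSet (κ : Cardinal.{0}) : Set ZFSet.{0} :=
  {x | ∃ t : ZFSet, t.IsTransitive ∧ x ∈ t ∧ Cardinal.mk t.toSet < Cardinal.lift.{1} κ}

/-- The first-order language with one binary relation (membership) and one
unary relation (a predicate). -/
def mLang : FirstOrder.Language where
  Functions := fun _ => Empty
  Relations := fun n => match n with
    | 1 => Unit
    | 2 => Unit
    | _ => Empty

/-- The `mLang`-structure on a set `A` of `ZFSet`s, with `∈` as the binary
relation and (membership in) `T` as the unary predicate. -/
def zStr (T : Set ZFSet) (A : Set ZFSet) : mLang.Structure ↥A where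
  funMap := fun {_} f _ => f.elim
  RelMap := fun {n} r v =>
    match n, r, v with
    | 1, _, v => (v 0 : ZFSet) ∈ T
    | 2, _, v => (v 0 : ZFSet) ∈ (v 1 : ZFSet)

/-- `N` is an elementary submodel of `(A; ∈, T)`. -/
def ElemIn (T : Set ZFSet) (N A : Set ZFSet) : Prop :=
  ∃ h : N ⊆ A, ∀ (n : ℕ) (φ : mLang.Formula (Fin n)) (v : Fin n → ↥N),
    (letI := zStr T A
     φ.Realize (fun i => Set.inclusion h (v i))) ↔
    (letI := zStr T N
     φ.Realize v)

/-- The trace of `N` on the countable ordinals: `N ∩ ω₁`. -/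
def htr (N : ZFSet) : Set Ordinal :=
  {o | o < (Cardinal.aleph 1).ord ∧ ordToZF o ∈ N}

/-- `f` is an isomorphism between `(N; ∈, T)` and `(N'; ∈, T)`. -/
def IsIsoZ (T : Set ZFSet) (N N' : ZFSet) (f : ZFSet → ZFSet) : Prop :=
  Set.BijOn f N.toSet N'.toSet ∧
    (∀ x ∈ N.toSet, ∀ y ∈ N.toSet, (x ∈ y ↔ f x ∈ f y)) ∧
    (∀ x ∈ N.toSet, (x ∈ T ↔ f x ∈ T))

/-- `cl(N)`: `N` together with the closure of `N ∩ Ord` in the order topology. -/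
def clZ (N : ZFSet) : Set ZFSet :=
  N.toSet ∪
    {z | ∃ α : Ordinal, Order.IsSuccLimit α ∧ sSup {b | b < α ∧ ordToZF b ∈ N} = α ∧ z = ordToZF α}

/-- The order type of a set of ordinals. -/
noncomputable def otype (s : Set Ordinal) : Ordinal :=
  letI : IsWellOrder s (· < ·) := isWellOrder_lt
  Ordinal.type (α := s) (· < ·)

/-- The canonical extension of the isomorphism `f : N → N'` to `cl(N)` is the
identity on `cl(N) ∩ cl(N')`. -/
def CanonExtId (N N' : ZFSet) (f : ZFSet → ZFSet) : Prop :=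
  (∀ x ∈ N.toSet ∩ clZ N', f x = x) ∧
  ∀ α : Ordinal, Order.IsSuccLimit α → sSup {b | b < α ∧ ordToZF b ∈ N} = α → ordToZF α ∈ clZ N' →
    sSup {b | ∃ a, a < α ∧ ordToZF a ∈ N ∧ f (ordToZF a) = ordToZF b} = α

/-- A `T`-symmetric system of countable elementary submodels of `(H(θ); ∈, T)`. -/
structure IsTSymmetricSystem (θ : Cardinal.{0}) (T : Set ZFSet) (𝒩 : Set ZFSet) : Prop where
  finite : 𝒩.Finite
  countable : ∀ N ∈ 𝒩, N.toSet.Countable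
  hasHeight : ∀ N ∈ 𝒩, ∃ δ, δ < (Cardinal.aleph 1).ord ∧ htr N = Set.Iio δ
  elem : ∀ N ∈ 𝒩, ElemIn T N.toSet (HSet θ)
  iso_exists : ∀ N ∈ 𝒩, ∀ N' ∈ 𝒩, N ≠ N' → htr N = htr N' → ∃ f, IsIsoZ T N N' f
  iso_unique : ∀ N ∈ 𝒩, ∀ N' ∈ 𝒩, N ≠ N' → htr N = htr N' →
    ∀ f g, IsIsoZ T N N' f → IsIsoZ T N N' g → Set.EqOn f g N.toSet
  iso_id : ∀ N ∈ 𝒩, ∀ N' ∈ 𝒩, N ≠ N' → htr N = htr N' →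
    ∀ f, IsIsoZ T N N' f → ∀ x ∈ N.toSet ∩ N'.toSet, f x = x
  cover : ∀ N ∈ 𝒩, ∀ M ∈ 𝒩,
    (∃ δM δN, htr M = Set.Iio δM ∧ htr N = Set.Iio δN ∧ δM < δN) →
    ∃ N' ∈ 𝒩, htr N' = htr N ∧ M ∈ N'
  isoImage : ∀ N ∈ 𝒩, ∀ N' ∈ 𝒩, N ≠ N' → htr N = htr N' → ∀ M ∈ 𝒩, M ∈ N →
    ∀ f, IsIsoZ T N N' f → f M ∈ 𝒩

/-- The closedness condition on a `T`-symmetric system: the canonical extension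
of each isomorphism `Ψ_{N,N'}` to `cl(N)` is the identity on `cl(N) ∩ cl(N')`. -/
def ClosedIsoProp (T : Set ZFSet) (𝒩 : Set ZFSet) : Prop :=
  ∀ N ∈ 𝒩, ∀ N' ∈ 𝒩, N ≠ N' → htr N = htr N' → ∀ f, IsIsoZ T N N' f → CanonExtId N N' f

/-- A closed `T`-symmetric system. -/
def IsClosedTSymmetricSystem (θ : Cardinal.{0}) (T : Set ZFSet) (𝒩 : Set ZFSet) : Prop :=
  IsTSymmetricSystem θ T 𝒩 ∧ ClosedIsoProp T 𝒩

/-- `β_Q`: the largest ordinal of `cl(Q)` below `β` (as a supremum). -/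
noncomputable def clTraceMax (Q : ZFSet) (β : Ordinal) : Ordinal :=
  sSup {o | o < β ∧ ordToZF o ∈ clZ Q}

/-- A bounding sequence for `𝒩` relative to `α₀` below `β`. -/
def BoundingSeq (T : Set ZFSet) (𝒩 : Set ZFSet) (α₀ β : Ordinal) (ρ : ℕ → Ordinal) : Prop :=
  StrictMono ρ ∧ (∀ i, ρ i < β) ∧ ρ 0 = α₀ + 1 ∧
  ∀ i : ℕ, ∀ Q₀ ∈ 𝒩, ∀ Q₁ ∈ 𝒩, htr Q₀ = htr Q₁ → ∀ f, IsIsoZ T Q₀ Q₁ f →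
    sSup ({b | ∃ a, a < ρ i ∧ ordToZF a ∈ Q₀ ∧ f (ordToZF a) = ordToZF b} ∩
        Set.Iio (min (clTraceMax Q₀ β) (clTraceMax Q₁ β))) <
      min (clTraceMax Q₀ β) (clTraceMax Q₁ β) →
    sSup ({b | ∃ a, a < ρ i ∧ ordToZF a ∈ Q₀ ∧ f (ordToZF a) = ordToZF b} ∩
        Set.Iio (min (clTraceMax Q₀ β) (clTraceMax Q₁ β))) < ρ (i + 1)


/-! ### Auxiliary lemmas -/

/-- The membership relation symbol of `mLang`. -/
def memRel : mLang.Relations 2 := ()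

/-- The extensionality formula with two free variables. -/
def extFml : mLang.Formula (Fin 2) :=
  (FirstOrder.Language.BoundedFormula.all
    ((memRel.boundedFormula₂ (Language.Term.var (Sum.inr 0)) (Language.Term.var (Sum.inl 0))).iff
     (memRel.boundedFormula₂ (Language.Term.var (Sum.inr 0)) (Language.Term.var (Sum.inl 1))))).imp
  (Language.Term.bdEqual (Language.Term.var (Sum.inl 0)) (Language.Term.var (Sum.inl 1)))

lemma realize_extFml (T A : Set ZFSet) (v : Fin 2 → ↥A) :
    (letI := zStr T A; extFml.Realize v) ↔
    ((∀ z : ↥A, (z : ZFSet) ∈ (v 0 : ZFSet) ↔ (z : ZFSet) ∈ (v 1 : ZFSet)) → v 0 = v 1) := by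
  letI := zStr T A
  simp [extFml, Language.Formula.Realize, Language.BoundedFormula.realize_imp,
    Language.BoundedFormula.realize_all, Language.BoundedFormula.realize_iff,
    Language.BoundedFormula.realize_rel₂, Language.BoundedFormula.realize_bdEqual]
  rfl

lemma hset_mem_trans {κ : Cardinal.{0}} {x y : ZFSet} (hx : x ∈ HSet κ) (hy : y ∈ x) :
    y ∈ HSet κ := by
  obtain ⟨t, ht, hxt, hc⟩ := hx
  exact ⟨t, ht, ht.mem_trans hy hxt, hc⟩

/-- Elementary submodels of `H(κ)` are extensional. -/
lemma elem_ext {κ : Cardinal.{0}} {T : Set ZFSet} {S : Set ZFSet}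
    (he : ElemIn T S (HSet κ)) {x y : ZFSet} (hx : x ∈ S) (hy : y ∈ S)
    (h : ∀ z ∈ S, (z ∈ x ↔ z ∈ y)) : x = y := by
  obtain ⟨hsub, hel⟩ := he
  have key := hel 2 extFml ![⟨x, hx⟩, ⟨y, hy⟩]
  rw [realize_extFml, realize_extFml] at key
  have hH : (∀ z : ↥(HSet κ),
      (z : ZFSet) ∈ ((Set.inclusion hsub (![⟨x, hx⟩, ⟨y, hy⟩] 0) : ↥(HSet κ)) : ZFSet) ↔
      (z : ZFSet) ∈ ((Set.inclusion hsub (![⟨x, hx⟩, ⟨y, hy⟩] 1) : ↥(HSet κ)) : ZFSet)) →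
      Set.inclusion hsub (![⟨x, hx⟩, ⟨y, hy⟩] 0) = Set.inclusion hsub (![⟨x, hx⟩, ⟨y, hy⟩] 1) := by
    intro hz
    apply Subtype.ext
    show x = y
    apply ZFSet.ext
    intro z
    constructor
    · intro hzx
      exact (hz ⟨z, hset_mem_trans (hsub hx) hzx⟩).1 hzx
    · intro hzy
      exact (hz ⟨z, hset_mem_trans (hsub hy) hzy⟩).2 hzy
  have := key.1 hH
  have h2 : (⟨x, hx⟩ : ↥S) = ⟨y, hy⟩ := by
    apply this
    intro z
    exact h (z : ZFSet) z.2
  exact congrArg Subtype.val h2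

/-- Any `∈`-automorphism of an elementary submodel of `H(κ)` is the identity. -/
lemma auto_id {κ : Cardinal.{0}} {T : Set ZFSet} {Q : ZFSet}
    (he : ElemIn T Q.toSet (HSet κ)) {f : ZFSet → ZFSet} (hf : IsIsoZ T Q Q f) :
    ∀ x ∈ Q.toSet, f x = x := by
  intro x
  induction x using ZFSet.mem_wf.induction with
  | _ x IH =>
    intro hx
    have hfx : f x ∈ Q.toSet := hf.1.mapsTo hx
    apply elem_ext he hfx (hx)
    intro z hzQ
    constructor
    · intro hzfx
      obtain ⟨y, hyQ, hyz⟩ := hf.1.surjOn hzQ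
      have hyx : y ∈ x := (hf.2.1 y hyQ x hx).2 (by rwa [hyz])
      have := IH y hyx hyQ
      rw [← hyz, this] at *
      exact hyx
    · intro hzx
      have : f z ∈ f x := (hf.2.1 z hzQ x hx).1 hzx
      rwa [IH z hzx hzQ] at this

lemma clTraceMax_le (Q : ZFSet) (β : Ordinal) : clTraceMax Q β ≤ β :=
  csSup_le' fun _ ho => ho.1.le

/-- A choice of isomorphism between `Q₀` and `Q₁`, if one exists. -/
noncomputable def isoFun (T : Set ZFSet) (Q₀ Q₁ : ZFSet) : ZFSet → ZFSet :=
  @dite _ (∃ f, IsIsoZ T Q₀ Q₁ f) (Classical.dec _) (fun h => h.choose) (fun _ => id)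

lemma isoFun_spec {T : Set ZFSet} {Q₀ Q₁ : ZFSet} (h : ∃ f, IsIsoZ T Q₀ Q₁ f) :
    IsIsoZ T Q₀ Q₁ (isoFun T Q₀ Q₁) := by
  rw [isoFun, dif_pos h]
  exact h.choose_spec

lemma eqOn_isoFun {κ : Cardinal.{0}} {T : Set ZFSet} {𝒩 : Set ZFSet}
    (h𝒩 : IsClosedTSymmetricSystem κ T 𝒩) {Q₀ Q₁ : ZFSet}
    (hQ₀ : Q₀ ∈ 𝒩) (hQ₁ : Q₁ ∈ 𝒩) (hh : htr Q₀ = htr Q₁)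
    {f : ZFSet → ZFSet} (hf : IsIsoZ T Q₀ Q₁ f) :
    Set.EqOn f (isoFun T Q₀ Q₁) Q₀.toSet := by
  have hex : ∃ g, IsIsoZ T Q₀ Q₁ g := ⟨f, hf⟩
  have hg := isoFun_spec hex
  by_cases hne : Q₀ = Q₁
  · subst hne
    intro x hx
    rw [auto_id (h𝒩.1.elem Q₀ hQ₀) hf x hx, auto_id (h𝒩.1.elem Q₀ hQ₀) hg x hx]
  · exact h𝒩.1.iso_unique Q₀ hQ₀ Q₁ hQ₁ hne hh f _ hf hg

/-- The image set appearing in the definition of bounding sequences. -/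
def fSet (Q₀ : ZFSet) (f : ZFSet → ZFSet) (x : Ordinal) : Set Ordinal :=
  {b | ∃ a, a < x ∧ ordToZF a ∈ Q₀ ∧ f (ordToZF a) = ordToZF b}

noncomputable def mpair (β : Ordinal) (p : ZFSet × ZFSet) : Ordinal :=
  min (clTraceMax p.1 β) (clTraceMax p.2 β)

noncomputable def valfun (T : Set ZFSet) (β : Ordinal) (x : Ordinal) (p : ZFSet × ZFSet) :
    Ordinal :=
  sSup (fSet p.1 (isoFun T p.1 p.2) x ∩ Set.Iio (mpair β p))

noncomputable def Vset (T : Set ZFSet) (β : Ordinal) (𝒩 : Set ZFSet) (x : Ordinal) :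
    Set Ordinal :=
  (valfun T β x '' (𝒩 ×ˢ 𝒩)) ∩ Set.Iio β

lemma Vset_finite {T : Set ZFSet} {β : Ordinal} {𝒩 : Set ZFSet} (h : 𝒩.Finite) (x : Ordinal) :
    (Vset T β 𝒩 x).Finite :=
  (((h.prod h).image _).inter_of_left _)

noncomputable def nextOrd (T : Set ZFSet) (β : Ordinal) (𝒩 : Set ZFSet) (x : Ordinal) :
    Ordinal :=
  sSup (insert (x + 1) ((· + 1) '' Vset T β 𝒩 x))

lemma nextOrd_finite {T : Set ZFSet} {β : Ordinal} {𝒩 : Set ZFSet} (h : 𝒩.Finite) (x : Ordinal) :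
    (insert (x + 1) ((· + 1) '' Vset T β 𝒩 x)).Finite :=
  ((Vset_finite h x).image _).insert _

lemma lt_nextOrd {T : Set ZFSet} {β : Ordinal} {𝒩 : Set ZFSet} (h : 𝒩.Finite) (x : Ordinal) :
    x < nextOrd T β 𝒩 x :=
  lt_of_lt_of_le (Order.lt_succ x) <| by
    simpa [Order.succ_eq_add_one, nextOrd] using
      le_csSup (nextOrd_finite h x).bddAbove (Set.mem_insert _ _)

lemma nextOrd_lt {T : Set ZFSet} {β : Ordinal} {𝒩 : Set ZFSet} (h : 𝒩.Finite)
    (hβ : Order.IsSuccLimit β) {x : Ordinal} (hx : x < β) : nextOrd T β 𝒩 x < β := by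
  have hmem : nextOrd T β 𝒩 x ∈ insert (x + 1) ((· + 1) '' Vset T β 𝒩 x) :=
    (Set.insert_nonempty _ _).csSup_mem (nextOrd_finite h x)
  rcases Set.mem_insert_iff.1 hmem with hm | ⟨s, hs, hseq⟩
  · rw [hm, Ordinal.add_one_eq_succ]
    exact hβ.succ_lt hx
  · rw [← hseq]
    show s + 1 < β
    rw [Ordinal.add_one_eq_succ]
    exact hβ.succ_lt hs.2

lemma mem_Vset_lt_nextOrd {T : Set ZFSet} {β : Ordinal} {𝒩 : Set ZFSet} (h : 𝒩.Finite)
    {x s : Ordinal} (hs : s ∈ Vset T β 𝒩 x) : s < nextOrd T β 𝒩 x :=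
  lt_of_lt_of_le (Order.lt_succ s) <| by
    simpa [Order.succ_eq_add_one, nextOrd] using
      le_csSup (nextOrd_finite h x).bddAbove
        (Set.mem_insert_of_mem _ ⟨s, hs, rfl⟩)

/-- The key step: any sup appearing in the bounding-sequence condition lands in `Vset`. -/
lemma sup_mem_Vset {κ : Cardinal.{0}} {T : Set ZFSet} {𝒩 : Set ZFSet} {β : Ordinal}
    (h𝒩 : IsClosedTSymmetricSystem κ T 𝒩) {Q₀ Q₁ : ZFSet}
    (hQ₀ : Q₀ ∈ 𝒩) (hQ₁ : Q₁ ∈ 𝒩) (hh : htr Q₀ = htr Q₁)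
    {f : ZFSet → ZFSet} (hf : IsIsoZ T Q₀ Q₁ f) (x : Ordinal)
    (hyp : sSup (fSet Q₀ f x ∩ Set.Iio (mpair β (Q₀, Q₁))) < mpair β (Q₀, Q₁)) :
    sSup (fSet Q₀ f x ∩ Set.Iio (mpair β (Q₀, Q₁))) ∈ Vset T β 𝒩 x := by
  have heq : fSet Q₀ f x = fSet Q₀ (isoFun T Q₀ Q₁) x := by
    ext b
    constructor
    · rintro ⟨a, ha, haQ, hfa⟩
      exact ⟨a, ha, haQ, by
        rw [← eqOn_isoFun h𝒩 hQ₀ hQ₁ hh hf haQ]; exact hfa⟩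
    · rintro ⟨a, ha, haQ, hfa⟩
      exact ⟨a, ha, haQ, by
        rw [eqOn_isoFun h𝒩 hQ₀ hQ₁ hh hf haQ]; exact hfa⟩
  constructor
  · refine ⟨(Q₀, Q₁), Set.mk_mem_prod hQ₀ hQ₁, ?_⟩
    rw [valfun, ← heq]
  · exact lt_of_lt_of_le hyp ((min_le_left _ _).trans (clTraceMax_le Q₀ β))

/-- Constructing a bounding sequence by iterating any function dominating `nextOrd`. -/
lemma boundingSeq_of_next {κ : Cardinal.{0}} {T : Set ZFSet} {𝒩 : Set ZFSet} {β α₀ : Ordinal}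
    (h𝒩 : IsClosedTSymmetricSystem κ T 𝒩) (hβ : Order.IsSuccLimit β) (hα₀ : α₀ < β)
    (g : Ordinal → Ordinal) (hg1 : ∀ x < β, g x < β)
    (hg2 : ∀ x < β, nextOrd T β 𝒩 x ≤ g x) :
    BoundingSeq T 𝒩 α₀ β (fun n => Nat.rec (α₀ + 1) (fun _ y => g y) n) := by
  set ρ : ℕ → Ordinal := fun n => Nat.rec (α₀ + 1) (fun _ y => g y) n with hρ
  have hlt : ∀ n, ρ n < β := by
    intro n
    induction n with
    | zero =>
      show α₀ + 1 < β
      rw [Ordinal.add_one_eq_succ]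
      exact hβ.succ_lt hα₀
    | succ n ih => exact hg1 _ ih
  have hstep : ∀ n, ρ n < ρ (n + 1) := fun n =>
    lt_of_lt_of_le (lt_nextOrd h𝒩.1.finite (ρ n)) (hg2 _ (hlt n))
  refine ⟨strictMono_nat_of_lt_succ hstep, hlt, rfl, ?_⟩
  intro i Q₀ hQ₀ Q₁ hQ₁ hh f hf hyp
  have hyp' : sSup (fSet Q₀ f (ρ i) ∩ Set.Iio (mpair β (Q₀, Q₁))) < mpair β (Q₀, Q₁) := hyp
  have hmem := sup_mem_Vset h𝒩 hQ₀ hQ₁ hh hf (ρ i) hyp'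
  have hsup := mem_Vset_lt_nextOrd h𝒩.1.finite hmem
  exact lt_of_lt_of_le hsup (hg2 _ (hlt i))

/-- Bounding sequences exist and can be refined. -/
theorem stmt17 (κ : Cardinal.{0}) (T : Set ZFSet) (β : Ordinal)
    (hβκ : β < κ.ord) (hβ : Order.IsSuccLimit β) (α₀ : Ordinal) (hα₀ : α₀ < β)
    (𝒩 : Set ZFSet) (h𝒩 : IsClosedTSymmetricSystem κ T 𝒩) :
    (∃ ρ : ℕ → Ordinal, BoundingSeq T 𝒩 α₀ β ρ) ∧
    (∀ Z : Set Ordinal, Z ⊆ Set.Iio β → (∀ γ < β, ∃ ξ ∈ Z, γ < ξ) → α₀ + 1 ∈ Z →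
      ∃ ρ : ℕ → Ordinal, BoundingSeq T 𝒩 α₀ β ρ ∧ ∀ i, ρ i ∈ Z) ∧
    (∀ ρ : ℕ → Ordinal, BoundingSeq T 𝒩 α₀ β ρ →
      ∀ s : ℕ → ℕ, StrictMono s → ρ (s 0) = α₀ + 1 →
        BoundingSeq T 𝒩 α₀ β (ρ ∘ s)) := by
  refine ⟨?_, ?_, ?_⟩
  · exact ⟨_, boundingSeq_of_next h𝒩 hβ hα₀ (nextOrd T β 𝒩)
      (fun x hx => nextOrd_lt h𝒩.1.finite hβ hx) (fun x _ => le_rfl)⟩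
  · intro Z hZβ hZcof hZα
    choose! g hg1 hg2 using hZcof
    have hbs := boundingSeq_of_next h𝒩 hβ hα₀ (fun x => g (nextOrd T β 𝒩 x))
      (fun x hx => hZβ (hg1 _ (nextOrd_lt h𝒩.1.finite hβ hx)))
      (fun x hx => (hg2 _ (nextOrd_lt h𝒩.1.finite hβ hx)).le)
    refine ⟨_, hbs, ?_⟩
    intro i
    cases i with
    | zero => exact hZα
    | succ n => exact hg1 _ (nextOrd_lt h𝒩.1.finite hβ (hbs.2.1 n))
  · intro ρ hρ s hs hs0
    obtain ⟨hmono, hlt, _, hcond⟩ := hρ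
    refine ⟨hmono.comp hs, fun i => hlt _, hs0, ?_⟩
    intro i Q₀ hQ₀ Q₁ hQ₁ hh f hf hyp
    have h1 := hcond (s i) Q₀ hQ₀ Q₁ hQ₁ hh f hf hyp
    have h2 : s i + 1 ≤ s (i + 1) := hs (Nat.lt_succ_self i)
    exact lt_of_lt_of_le h1 (hmono.monotone h2)
end
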